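/- Under event 𝒜, for every sampled vertex v' ∈ V', the set of k closest sampled vertices with respect to k-hop-limited distance in the skeleton graph G' equals the set of k closest sampled vertices with respect to (√n·k)-hop-limited distance in G: S'^{(k)}_{G'}[k](v') = S'^{(√n·k)}_G[k](v'). -/

import Mathlib

open scoped ENNReal

namespace Stmt8

variable {V : Type*}

/-- Endpoint of a walk starting at `u` with subsequent vertices given by the list. -/
def last : V → List V → V
  | u, [] => u
  | _, x :: xs => last x xs

/-- Weight of a walk starting at `u` with subsequent vertices given by the list. -/
noncomputable def cost (w : V → V → ℝ≥0∞) : V → List V → ℝ≥0∞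
  | _, [] => 0
  | u, x :: xs => w u x + cost w x xs

/-- `h`-hop-limited distance from `u` to `v` (non-edges have weight `⊤`). -/
noncomputable def hdist (w : V → V → ℝ≥0∞) (h : ℕ) (u v : V) : ℝ≥0∞ :=
  ⨅ p ∈ {p : List V | p.length ≤ h ∧ last u p = v}, cost w u p

/-- Shortest-path distance from `u` to `v`. -/
noncomputable def dist (w : V → V → ℝ≥0∞) (u v : V) : ℝ≥0∞ :=
  ⨅ h : ℕ, hdist w h u v

/-- `S` is a set of (at most) `k` closest reachable vertices to `v` (excluding `v`),
with ties broken arbitrarily: members of `S` are reachable and distinct from `v`,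
`|S| ≤ k`, every member is at least as close as every reachable non-member, and `S`
has exactly `k` elements unless it already contains all reachable vertices. -/
def IsKClosest [Fintype V] (w : V → V → ℝ≥0∞) (k : ℕ) (v : V) (S : Finset V) : Prop :=
  (∀ u ∈ S, u ≠ v ∧ dist w v u < ⊤) ∧ S.card ≤ k ∧
  (∀ y ∈ S, ∀ z, z ∉ S → z ≠ v → dist w v z < ⊤ → dist w v y ≤ dist w v z) ∧
  (∀ z, z ∉ S → z ≠ v → dist w v z < ⊤ → S.card = k)

/-- Weight function of the union `G ∪ G^(k)` of the graph with the `k`-shortcut hopset: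
hopset edges `(u,v)` (present when `u ∈ S v` or `v ∈ S u`) get weight `d_G(u,v)`. -/
noncomputable def unionW [Fintype V] [DecidableEq V] (w : V → V → ℝ≥0∞) (S : V → Finset V)
    (u v : V) : ℝ≥0∞ :=
  if u ∈ S v ∨ v ∈ S u then min (w u v) (dist w u v) else w u v


/-- `p` is the canonical `i`-hop-limited shortest `u`–`v` path: it has at most `i`
edges, ends at `v`, has minimum weight (equal to the `i`-limited distance), and among
such paths it has the fewest edges and is lexicographically smallest with respect to
the vertex identifiers `ids` (comparing vertex sequences from the tail `u`). -/
def CanonicalPath (w : V → V → ℝ≥0∞) (ids : V → ℕ) (i : ℕ) (u v : V) (p : List V) : Prop :=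
  p.length ≤ i ∧ last u p = v ∧ cost w u p = hdist w i u v ∧
  ∀ q : List V, q.length ≤ i → last u q = v → cost w u q = hdist w i u v →
    p.length ≤ q.length ∧
    (p.length = q.length → ¬ List.Lex (· < ·) ((u :: q).map ids) ((u :: p).map ids))

/-- Weight function of the skeleton graph `G'` on the sampled set `V'`: an edge
between two sampled vertices has weight equal to the `s`-hop-limited distance in `G`
(`⊤`, i.e. no edge, if they are not connected by an `s`-hop-limited path). -/
noncomputable def skelW [DecidableEq V] (w : V → V → ℝ≥0∞) (V' : Finset V) (s : ℕ)
    (u v : V) : ℝ≥0∞ :=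
  if u ∈ V' ∧ v ∈ V' then hdist w s u v else ⊤

/-- Minimum number of hops of an `i`-hop-limited minimum-weight `u`–`v` path. -/
noncomputable def minHops (w : V → V → ℝ≥0∞) (i : ℕ) (u v : V) : ℕ :=
  sInf {ℓ : ℕ | ∃ p : List V, p.length = ℓ ∧ ℓ ≤ i ∧ last u p = v ∧ cost w u p = hdist w i u v}

/-- Strict comparison of vertices by distance, with ties broken by the tie-breaking
key `tie` (lexicographically). -/
def keyLt (d : V → ℝ≥0∞) (tie : V → ℕ × ℕ) (y z : V) : Prop :=
  Prod.Lex (· < ·) (Prod.Lex (· < ·) (· < ·)) (d y, tie y) (d z, tie z)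

/-- `S` is the set of the `k` closest vertices of `dom` to `v` (excluding `v`) with
respect to the distance function `d`, with ties broken by the key `tie`: members are
reachable, `|S| ≤ k`, every member strictly precedes every reachable non-member, and
`S` has exactly `k` elements unless it contains all reachable vertices of `dom`. -/
def IsKNear (d : V → ℝ≥0∞) (tie : V → ℕ × ℕ) (dom : Finset V) (k : ℕ) (v : V)
    (S : Finset V) : Prop :=
  S ⊆ dom ∧ v ∉ S ∧ S.card ≤ k ∧ (∀ y ∈ S, d y < ⊤) ∧
  (∀ y ∈ S, ∀ z ∈ dom, z ∉ S → z ≠ v → d z < ⊤ → keyLt d tie y z) ∧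
  (∀ z ∈ dom, z ≠ v → d z < ⊤ → z ∉ S → S.card = k)

section Aux

theorem last_append (u : V) (A B : List V) :
    last u (A ++ B) = last (last u A) B := by
  induction A generalizing u with
  | nil => rfl
  | cons x xs ih => simpa [last] using ih x

theorem cost_append (w : V → V → ℝ≥0∞) (u : V) (A B : List V) :
    cost w u (A ++ B) = cost w u A + cost w (last u A) B := by
  induction A generalizing u with
  | nil => simp [cost, last]
  | cons x xs ih => simp [cost, last, ih x, add_assoc]

theorem last_mem (u : V) {p : List V} (hp : p ≠ []) : last u p ∈ p := by
  induction p generalizing u with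
  | nil => exact absurd rfl hp
  | cons x xs ih =>
    cases xs with
    | nil => simp [last]
    | cons y ys =>
      have := ih (u := x) (by simp)
      simpa [last] using Or.inr this

theorem last_take (u : V) (p : List V) (j : ℕ) (h : j < p.length) :
    last u (p.take (j + 1)) = p.get ⟨j, h⟩ := by
  induction p generalizing u j with
  | nil => simp at h
  | cons x xs ih =>
    cases j with
    | zero => simp [last]
    | succ j =>
      have hj : j < xs.length := by simpa using h
      simpa [last] using ih x j hj

theorem hdist_le_cost {w : V → V → ℝ≥0∞} {h : ℕ} {u v : V} {p : List V}
    (hlen : p.length ≤ h) (hlast : last u p = v) :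
    hdist w h u v ≤ cost w u p :=
  iInf₂_le p ⟨hlen, hlast⟩

theorem hdist_anti {w : V → V → ℝ≥0∞} {h h' : ℕ} (hh : h ≤ h') (u v : V) :
    hdist w h' u v ≤ hdist w h u v :=
  le_iInf₂ fun p hp => hdist_le_cost (hp.1.trans hh) hp.2

theorem hdist_self (w : V → V → ℝ≥0∞) (h : ℕ) (u : V) : hdist w h u u = 0 := by
  refine le_antisymm ?_ zero_le
  have := hdist_le_cost (w := w) (h := h) (u := u) (p := ([] : List V))
    (hlen := by simp) (hlast := rfl)
  simpa [cost, last] using this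

theorem hdist_exists [Fintype V] {w : V → V → ℝ≥0∞} {h : ℕ} {u v : V}
    (hfin : hdist w h u v < ⊤) :
    ∃ p : List V, p.length ≤ h ∧ last u p = v ∧ cost w u p = hdist w h u v := by
  classical
  set S : Set (List V) := {p : List V | p.length ≤ h ∧ last u p = v} with hS
  have hfinS : S.Finite := (List.finite_length_le V h).subset fun p hp => hp.1
  have heq : hdist w h u v = sInf (cost w u '' S) := by rw [sInf_image]; rfl
  have hSne : S.Nonempty := by
    rcases Set.eq_empty_or_nonempty S with he | hne
    · rw [heq, he, Set.image_empty, sInf_empty] at hfin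
      exact absurd hfin (lt_irrefl ⊤)
    · exact hne
  have hmem : sInf (cost w u '' S) ∈ cost w u '' S :=
    Set.Nonempty.csInf_mem (hSne.image _) (hfinS.image _)
  obtain ⟨p, hp, hc⟩ := hmem
  exact ⟨p, hp.1, hp.2, by rw [hc, heq]⟩

theorem hdist_triangle [Fintype V] (w : V → V → ℝ≥0∞) (a b : ℕ) (u x v : V) :
    hdist w (a + b) u v ≤ hdist w a u x + hdist w b x v := by
  rcases eq_top_or_lt_top (hdist w a u x) with h1 | h1
  · simp [h1]
  rcases eq_top_or_lt_top (hdist w b x v) with h2 | h2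
  · simp [h2]
  obtain ⟨p, hpl, hpe, hpc⟩ := hdist_exists h1
  obtain ⟨q, hql, hqe, hqc⟩ := hdist_exists h2
  calc hdist w (a + b) u v ≤ cost w u (p ++ q) := by
        refine hdist_le_cost ?_ ?_
        · simpa using Nat.add_le_add hpl hql
        · rw [last_append, hpe, hqe]
    _ = hdist w a u x + hdist w b x v := by rw [cost_append, hpe, hpc, hqc]

theorem lex_append_left {α : Type*} {r : α → α → Prop} {l₁ l₂ : List α}
    (h : List.Lex r l₁ l₂) (c : List α) : List.Lex r (c ++ l₁) (c ++ l₂) := by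
  induction c with
  | nil => exact h
  | cons a c ih => exact List.Lex.cons ih

theorem lex_append_right {α : Type*} {r : α → α → Prop} (s : List α) {l₁ l₂ : List α}
    (h : List.Lex r l₁ l₂) :
    l₁.length = l₂.length → List.Lex r (l₁ ++ s) (l₂ ++ s) := by
  induction h with
  | nil => intro hl; simp at hl
  | cons h ih => intro hl; exact List.Lex.cons (ih (by simpa using hl))
  | rel h => intro _; exact List.Lex.rel h

theorem lex_eq_of_not {l₁ l₂ : List ℕ}
    (h₁ : ¬ List.Lex (· < ·) l₁ l₂) (h₂ : ¬ List.Lex (· < ·) l₂ l₁) : l₁ = l₂ := by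
  induction l₁ generalizing l₂ with
  | nil =>
    cases l₂ with
    | nil => rfl
    | cons b m => exact absurd List.Lex.nil h₁
  | cons a l ih =>
    cases l₂ with
    | nil => exact absurd List.Lex.nil h₂
    | cons b m =>
      rcases lt_trichotomy a b with hab | hab | hab
      · exact absurd (List.Lex.rel hab) h₁
      · subst hab
        rw [ih (fun hl => h₁ (List.Lex.cons hl)) (fun hl => h₂ (List.Lex.cons hl))]
      · exact absurd (List.Lex.rel hab) h₂

theorem canonical_unique {w : V → V → ℝ≥0∞} {ids : V → ℕ} (hids : Function.Injective ids)
    {i : ℕ} {u v : V} {p q : List V}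
    (hp : CanonicalPath w ids i u v p) (hq : CanonicalPath w ids i u v q) : p = q := by
  have h1 := hp.2.2.2 q hq.1 hq.2.1 hq.2.2.1
  have h2 := hq.2.2.2 p hp.1 hp.2.1 hp.2.2.1
  have hlen : p.length = q.length := le_antisymm h1.1 h2.1
  have he : (u :: p).map ids = (u :: q).map ids :=
    lex_eq_of_not (h2.2 hlen.symm) (h1.2 hlen)
  have := List.map_injective_iff.mpr hids he
  exact (List.cons.injEq _ _ _ _ ▸ this).2

theorem last_take' (u : V) (p : List V) (a : ℕ) (ha : a < (u :: p).length) :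
    last u (p.take a) = (u :: p).get ⟨a, ha⟩ := by
  cases a with
  | zero => simp [last]
  | succ j =>
    have hj : j < p.length := by simpa using ha
    simpa using last_take u p j hj

theorem canonical_cut {w : V → V → ℝ≥0∞} {ids : V → ℕ} {i : ℕ} {u v : V} {p : List V}
    (hc : CanonicalPath w ids i u v p) {a b : ℕ}
    (ha : a < (u :: p).length) (hb : b < (u :: p).length) (hab : a < b)
    (hget : (u :: p).get ⟨a, ha⟩ = (u :: p).get ⟨b, hb⟩) : False := by
  have hble : b ≤ p.length := by simpa [Nat.lt_succ_iff] using hb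
  set A := p.take a with hA
  set M := (p.drop a).take (b - a) with hM
  set C := p.drop b with hC
  set g := (u :: p).get ⟨b, hb⟩ with hg
  have htb : p.take b = A ++ M := by
    conv_lhs => rw [show b = a + (b - a) by omega]
    exact List.take_add
  have hp2 : p = (A ++ M) ++ C := by rw [← htb, List.take_append_drop]
  have hxa : last u A = g := by rw [hA, last_take' u p a ha, hget]
  have hxb : last u (A ++ M) = g := by rw [← htb, last_take' u p b hb]
  have hlenA : A.length = a := by
    rw [hA, List.length_take]; omega
  have hlast' : last u (A ++ C) = v := by
    have hv : last u p = v := hc.2.1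
    rw [hp2, last_append, hxb] at hv
    rw [last_append, hxa, hv]
  have hcostp : cost w u p = cost w u A + (cost w g M + cost w g C) := by
    conv_lhs => rw [hp2]
    rw [cost_append, cost_append, hxa, hxb, add_assoc]
  have hcost' : cost w u (A ++ C) = cost w u A + cost w g C := by
    rw [cost_append, hxa]
  have hcle : cost w u (A ++ C) ≤ cost w u p := by
    rw [hcostp, hcost']
    exact add_le_add_right le_add_self _
  have hlen' : (A ++ C).length < p.length := by
    rw [List.length_append, hlenA, hC, List.length_drop]; omega
  have hcost'' : cost w u (A ++ C) = hdist w i u v :=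
    le_antisymm (hc.2.2.1 ▸ hcle) (hdist_le_cost (hlen'.le.trans hc.1) hlast')
  have := (hc.2.2.2 (A ++ C) (hlen'.le.trans hc.1) hlast' hcost'').1
  omega

theorem canonical_nodup {w : V → V → ℝ≥0∞} {ids : V → ℕ} {i : ℕ} {u v : V} {p : List V}
    (hc : CanonicalPath w ids i u v p) : (u :: p).Nodup := by
  by_contra hnd
  rw [List.nodup_iff_injective_get] at hnd
  obtain ⟨a, b, heq, hne⟩ := Function.not_injective_iff.mp hnd
  have hvne : (a : ℕ) ≠ (b : ℕ) := fun h => hne (Fin.ext h)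
  rcases lt_or_gt_of_ne hvne with h | h
  · exact canonical_cut hc a.isLt b.isLt h heq
  · exact canonical_cut hc b.isLt a.isLt h heq.symm

theorem canonical_shrink {w : V → V → ℝ≥0∞} {ids : V → ℕ} {i : ℕ} {u v : V} {p : List V}
    (hc : CanonicalPath w ids i u v p) : CanonicalPath w ids p.length u v p := by
  have hd : hdist w p.length u v = hdist w i u v := by
    refine le_antisymm ?_ (hdist_anti hc.1 u v)
    rw [← hc.2.2.1]
    exact hdist_le_cost le_rfl hc.2.1
  refine ⟨le_rfl, hc.2.1, by rw [hd]; exact hc.2.2.1, ?_⟩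
  intro q hq1 hq2 hq3
  exact hc.2.2.2 q (hq1.trans hc.1) hq2 (by rw [← hd]; exact hq3)

theorem canonical_take [Fintype V] {w : V → V → ℝ≥0∞} {ids : V → ℕ} {i : ℕ} {u v : V}
    {p : List V} (hc : CanonicalPath w ids i u v p) (hfin : cost w u p < ⊤)
    (A B : List V) (hAB : p = A ++ B) :
    CanonicalPath w ids A.length u (last u A) A := by
  set x := last u A with hx
  have hsplit : cost w u p = cost w u A + cost w x B := by rw [hAB, cost_append]
  have hAfin : cost w u A < ⊤ := lt_of_le_of_lt (by rw [hsplit]; exact le_self_add) hfin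
  have hBfin : cost w x B < ⊤ := lt_of_le_of_lt (by rw [hsplit]; exact le_add_self) hfin
  have hAd : hdist w A.length u x < ⊤ := lt_of_le_of_lt (hdist_le_cost le_rfl rfl) hAfin
  obtain ⟨q, hql, hqe, hqc⟩ := hdist_exists hAd
  have hlastp : last u p = v := hc.2.1
  have hlastB : last x B = v := by rw [hAB, last_append] at hlastp; exact hlastp
  have hlenp : A.length + B.length ≤ i := by
    have := hc.1; rw [hAB, List.length_append] at this; exact this
  have hlen : (q ++ B).length ≤ i := by
    rw [List.length_append]; exact le_trans (Nat.add_le_add_right hql _) hlenp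
  have hlast : last u (q ++ B) = v := by rw [last_append, hqe, hlastB]
  have hcost_le : cost w u (q ++ B) ≤ cost w u p := by
    rw [cost_append, hqe, hsplit]
    exact add_le_add_left (hqc.trans_le (hdist_le_cost le_rfl rfl)) _
  have hcost : cost w u (q ++ B) = hdist w i u v :=
    le_antisymm (hc.2.2.1 ▸ hcost_le) (hdist_le_cost hlen hlast)
  have hmin := hc.2.2.2 (q ++ B) hlen hlast hcost
  have hlenA : q.length = A.length := by
    have := hmin.1; rw [hAB, List.length_append, List.length_append] at this
    omega
  have hcA : cost w u A = hdist w A.length u x := by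
    have h1 : cost w u q + cost w x B = cost w u A + cost w x B := by
      have e1 : cost w u (q ++ B) = cost w u p := by rw [hcost, hc.2.2.1]
      rw [cost_append, hqe] at e1; rw [e1, hsplit]
    have h2 : cost w x B + cost w u q = cost w x B + cost w u A := by
      rw [add_comm (cost w x B), add_comm (cost w x B), h1]
    rw [← hqc, (ENNReal.add_right_inj hBfin.ne).mp h2]
  refine ⟨le_rfl, rfl, hcA, ?_⟩
  intro r hr1 hr2 hr3
  have hrB_len : (r ++ B).length ≤ i := by
    rw [List.length_append]; exact le_trans (Nat.add_le_add_right hr1 _) hlenp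
  have hrB_last : last u (r ++ B) = v := by rw [last_append, hr2, hlastB]
  have hrB_cost : cost w u (r ++ B) = hdist w i u v := by
    rw [cost_append, hr2, hr3, ← hcA, ← hsplit, hc.2.2.1]
  have h := hc.2.2.2 (r ++ B) hrB_len hrB_last hrB_cost
  constructor
  · have := h.1; rw [hAB, List.length_append, List.length_append] at this; omega
  · intro hlen2 hlex
    have hlex2 : List.Lex (· < ·) (((u :: r) ++ B).map ids) (((u :: A) ++ B).map ids) := by
      rw [List.map_append, List.map_append]
      exact lex_append_right _ hlex (by simp [hlen2])
    have hplen : p.length = (r ++ B).length := by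
      rw [hAB, List.length_append, List.length_append, hlen2]
    exact (h.2 hplen) (by rw [hAB]; simpa using hlex2)

theorem canonical_drop [Fintype V] {w : V → V → ℝ≥0∞} {ids : V → ℕ} {i : ℕ} {u v : V}
    {p : List V} (hc : CanonicalPath w ids i u v p) (hfin : cost w u p < ⊤)
    (A B : List V) (hAB : p = A ++ B) :
    CanonicalPath w ids B.length (last u A) v B := by
  set x := last u A with hx
  have hsplit : cost w u p = cost w u A + cost w x B := by rw [hAB, cost_append]
  have hAfin : cost w u A < ⊤ := lt_of_le_of_lt (by rw [hsplit]; exact le_self_add) hfin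
  have hBfin : cost w x B < ⊤ := lt_of_le_of_lt (by rw [hsplit]; exact le_add_self) hfin
  have hlastp : last u p = v := hc.2.1
  have hlastB : last x B = v := by rw [hAB, last_append] at hlastp; exact hlastp
  have hBd : hdist w B.length x v < ⊤ := lt_of_le_of_lt (hdist_le_cost le_rfl hlastB) hBfin
  obtain ⟨q, hql, hqe, hqc⟩ := hdist_exists hBd
  have hlenp : A.length + B.length ≤ i := by
    have := hc.1; rw [hAB, List.length_append] at this; exact this
  have hlen : (A ++ q).length ≤ i := by
    rw [List.length_append]; exact le_trans (Nat.add_le_add_left hql _) hlenp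
  have hlast : last u (A ++ q) = v := by rw [last_append, ← hx, hqe]
  have hcost_le : cost w u (A ++ q) ≤ cost w u p := by
    rw [cost_append, ← hx, hsplit]
    exact add_le_add_right (hqc.trans_le (hdist_le_cost le_rfl hlastB)) _
  have hcost : cost w u (A ++ q) = hdist w i u v :=
    le_antisymm (hc.2.2.1 ▸ hcost_le) (hdist_le_cost hlen hlast)
  have hmin := hc.2.2.2 (A ++ q) hlen hlast hcost
  have hlenB : q.length = B.length := by
    have := hmin.1; rw [hAB, List.length_append, List.length_append] at this
    omega
  have hcB : cost w x B = hdist w B.length x v := by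
    have h1 : cost w u A + cost w x q = cost w u A + cost w x B := by
      have e1 : cost w u (A ++ q) = cost w u p := by rw [hcost, hc.2.2.1]
      rw [cost_append, ← hx] at e1; rw [e1, hsplit]
    rw [← hqc, (ENNReal.add_right_inj hAfin.ne).mp h1]
  refine ⟨le_rfl, hlastB, hcB, ?_⟩
  intro r hr1 hr2 hr3
  have hrA_len : (A ++ r).length ≤ i := by
    rw [List.length_append]; exact le_trans (Nat.add_le_add_left hr1 _) hlenp
  have hrA_last : last u (A ++ r) = v := by rw [last_append, ← hx, hr2]
  have hrA_cost : cost w u (A ++ r) = hdist w i u v := by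
    rw [cost_append, ← hx, hr3, ← hcB, ← hsplit, hc.2.2.1]
  have h := hc.2.2.2 (A ++ r) hrA_len hrA_last hrA_cost
  constructor
  · have := h.1; rw [hAB, List.length_append, List.length_append] at this; omega
  · intro hlen2 hlex
    have hlex1 : List.Lex (· < ·) (r.map ids) (B.map ids) := by
      have : List.Lex (· < ·) ((ids x) :: r.map ids) ((ids x) :: B.map ids) := by
        simpa using hlex
      exact List.lex_cons_iff.mp this
    have hlex2 : List.Lex (· < ·) ((u :: (A ++ r)).map ids) ((u :: (A ++ B)).map ids) := by
      have := lex_append_left hlex1 ((u :: A).map ids)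
      simpa using this
    have hplen : p.length = (A ++ r).length := by
      rw [hAB, List.length_append, List.length_append, hlen2]
    exact (h.2 hplen) (by rw [hAB]; exact hlex2)

theorem minHops_le {w : V → V → ℝ≥0∞} {i : ℕ} {u v : V} {p : List V}
    (hlen : p.length ≤ i) (hlast : last u p = v) (hcost : cost w u p = hdist w i u v) :
    minHops w i u v ≤ p.length :=
  Nat.sInf_le ⟨p, rfl, hlen, hlast, hcost⟩

theorem minHops_canonical {w : V → V → ℝ≥0∞} {ids : V → ℕ} {i : ℕ} {u v : V} {p : List V}
    (hc : CanonicalPath w ids i u v p) : minHops w i u v = p.length := by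
  have h1 : minHops w i u v ≤ p.length := minHops_le hc.1 hc.2.1 hc.2.2.1
  have hne : {ℓ : ℕ | ∃ q : List V, q.length = ℓ ∧ ℓ ≤ i ∧ last u q = v ∧
      cost w u q = hdist w i u v}.Nonempty := ⟨p.length, p, rfl, hc.1, hc.2.1, hc.2.2.1⟩
  obtain ⟨q, hq1, hq2, hq3, hq4⟩ := Nat.sInf_mem hne
  have h2 : p.length ≤ minHops w i u v := by
    rw [minHops, ← hq1]
    exact (hc.2.2.2 q (hq1 ▸ hq2) hq3 hq4).1
  exact le_antisymm h1 h2

theorem cost_skel_ge [Fintype V] [DecidableEq V] (w : V → V → ℝ≥0∞) (V' : Finset V)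
    (s : ℕ) : ∀ (p : List V) (u : V),
    hdist w (s * p.length) u (last u p) ≤ cost (skelW w V' s) u p := by
  intro p
  induction p with
  | nil =>
    intro u
    have := hdist_le_cost (w := w) (h := s * ([] : List V).length) (u := u)
      (p := ([] : List V)) (hlen := by simp) (hlast := rfl)
    simpa [cost] using this
  | cons x xs ih =>
    intro u
    show hdist w (s * (xs.length + 1)) u (last x xs) ≤
      skelW w V' s u x + cost (skelW w V' s) x xs
    by_cases hmem : u ∈ V' ∧ x ∈ V'
    · rw [skelW, if_pos hmem]
      have he : s * (xs.length + 1) = s + s * xs.length := by ring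
      calc hdist w (s * (xs.length + 1)) u (last x xs)
          = hdist w (s + s * xs.length) u (last x xs) := by rw [he]
        _ ≤ hdist w s u x + hdist w (s * xs.length) x (last x xs) :=
            hdist_triangle w s (s * xs.length) u x (last x xs)
        _ ≤ hdist w s u x + cost (skelW w V' s) x xs := add_le_add_right (ih x) _
    · rw [skelW, if_neg hmem]
      simp

theorem hdist_skel_ge [Fintype V] [DecidableEq V] (w : V → V → ℝ≥0∞) (V' : Finset V)
    (s k : ℕ) (u v : V) :
    hdist w (s * k) u v ≤ hdist (skelW w V' s) k u v := by
  refine le_iInf₂ fun p hp => ?_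
  calc hdist w (s * k) u v ≤ hdist w (s * p.length) u v :=
        hdist_anti (Nat.mul_le_mul_left s hp.1) u v
    _ = hdist w (s * p.length) u (last u p) := by rw [hp.2]
    _ ≤ cost (skelW w V' s) u p := cost_skel_ge w V' s p u

theorem keyLt_asymm (d : V → ℝ≥0∞) (tie : V → ℕ × ℕ) {y z : V}
    (h1 : keyLt d tie y z) (h2 : keyLt d tie z y) : False := by
  rw [keyLt, Prod.lex_def] at h1 h2
  dsimp only at h1 h2
  rcases h1 with h1 | ⟨e1, h1⟩ <;> rcases h2 with h2 | ⟨e2, h2⟩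
  · exact absurd h2 (not_lt.mpr h1.le)
  · exact absurd h1 (e2 ▸ lt_irrefl _)
  · exact absurd h2 (e1 ▸ lt_irrefl _)
  · rw [Prod.lex_def] at h1 h2
    rcases h1 with h1 | ⟨f1, h1⟩ <;> rcases h2 with h2 | ⟨f2, h2⟩ <;> omega

theorem isKNear_subset {d : V → ℝ≥0∞} {tie : V → ℕ × ℕ} {dom : Finset V} {k : ℕ} {v : V}
    {S T : Finset V} [DecidableEq V]
    (hS : IsKNear d tie dom k v S) (hT : IsKNear d tie dom k v T) : S ⊆ T := by
  intro y hyS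
  by_contra hyT
  have hyv : y ≠ v := fun h => hS.2.1 (h ▸ hyS)
  have hyfin := hS.2.2.2.1 y hyS
  have hydom := hS.1 hyS
  have hcardT : T.card = k := hT.2.2.2.2.2 y hydom hyv hyfin hyT
  have hns : ¬ T ⊆ S := by
    intro hTS
    have : T = S := Finset.eq_of_subset_of_card_le hTS (hcardT ▸ hS.2.2.1)
    exact hyT (this ▸ hyS)
  obtain ⟨t, htT, htS⟩ := Finset.not_subset.mp hns
  have htv : t ≠ v := fun h => hT.2.1 (h ▸ htT)
  have htfin := hT.2.2.2.1 t htT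
  have htdom := hT.1 htT
  have h1 := hS.2.2.2.2.1 y hyS t htdom htS htv htfin
  have h2 := hT.2.2.2.2.1 t htT y hydom hyT hyv hyfin
  exact keyLt_asymm d tie h1 h2

theorem isKNear_unique {d : V → ℝ≥0∞} {tie : V → ℕ × ℕ} {dom : Finset V} {k : ℕ} {v : V}
    {S T : Finset V} [DecidableEq V]
    (hS : IsKNear d tie dom k v S) (hT : IsKNear d tie dom k v T) : S = T :=
  subset_antisymm (isKNear_subset hS hT) (isKNear_subset hT hS)

theorem lemB [Fintype V] [DecidableEq V]
    (w : V → V → ℝ≥0∞) (n : ℕ) (ids : V → ℕ) (hids : Function.Injective ids)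
    (P : ℕ → V → V → List V)
    (hP : ∀ i u v, hdist w i u v < ⊤ → CanonicalPath w ids i u v (P i u v))
    (V' : Finset V)
    (hA : ∀ i u v, hdist w i u v < ⊤ → Nat.sqrt n ≤ (P i u v).length →
      ∃ x ∈ (P i u v).dropLast, x ∈ V') :
    ∀ (N : ℕ) (p : List V) (u z : V), p.length ≤ N → u ∈ V' → z ∈ V' →
      CanonicalPath w ids p.length u z p → cost w u p < ⊤ →
      ∃ q : List V, last u q = z ∧
        cost (skelW w V' (Nat.sqrt n)) u q ≤ cost w u p ∧
        q.length ≤ (insert z ((p.dropLast.filter (· ∈ V')).toFinset)).card := by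
  intro N
  induction N with
  | zero =>
    intro p u z hlen hu hz hc hfin
    have hp : p = [] := List.length_eq_zero_iff.mp (Nat.le_zero.mp hlen)
    subst hp
    have huz : u = z := hc.2.1
    refine ⟨[z], rfl, ?_, ?_⟩
    · have h1 : cost (skelW w V' (Nat.sqrt n)) u [z] = skelW w V' (Nat.sqrt n) u z := by
        simp [cost]
      rw [h1, skelW, if_pos ⟨hu, hz⟩, ← huz, hdist_self]
      exact zero_le
    · have hz1 : z ∈ insert z ((([] : List V).dropLast.filter (· ∈ V')).toFinset) :=
        Finset.mem_insert_self _ _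
      simpa using Finset.card_pos.mpr ⟨z, hz1⟩
  | succ N ihN =>
    intro p u z hlen hu hz hc hfin
    by_cases hsamp : ∃ x ∈ p.dropLast, x ∈ V'
    · obtain ⟨x, hxd, hxV⟩ := hsamp
      obtain ⟨j, hj, hget⟩ := List.mem_iff_getElem.mp hxd
      rw [List.getElem_dropLast] at hget
      rw [List.length_dropLast] at hj
      have hjp : j + 1 < p.length := by omega
      set A := p.take (j + 1) with hA
      set B := p.drop (j + 1) with hB
      have hAB : p = A ++ B := (List.take_append_drop _ p).symm
      have hAlen : A.length = j + 1 := by rw [hA, List.length_take]; omega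
      have hBlen : B.length = p.length - (j + 1) := by rw [hB, List.length_drop]
      have hAne : A ≠ [] := by
        intro h; rw [h] at hAlen; simp at hAlen
      have hBne : B ≠ [] := by
        intro h; rw [h] at hBlen; simp at hBlen; omega
      have hlastA : last u A = x := by
        rw [hA, last_take u p j (by omega)]
        simpa using hget
      have hAcan0 := canonical_take hc hfin A B hAB
      have hBcan0 := canonical_drop hc hfin A B hAB
      rw [hlastA] at hAcan0 hBcan0
      have hsplit : cost w u p = cost w u A + cost w x B := by
        rw [hAB, cost_append, hlastA]
      have hAfin : cost w u A < ⊤ := lt_of_le_of_lt (by rw [hsplit]; exact le_self_add) hfin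
      have hBfin : cost w x B < ⊤ := lt_of_le_of_lt (by rw [hsplit]; exact le_add_self) hfin
      obtain ⟨qA, hqA1, hqA2, hqA3⟩ := ihN A u x (by omega) hu hxV hAcan0 hAfin
      obtain ⟨qB, hqB1, hqB2, hqB3⟩ := ihN B x z (by omega) hxV hz hBcan0 hBfin
      refine ⟨qA ++ qB, ?_, ?_, ?_⟩
      · rw [last_append, hqA1, hqB1]
      · rw [cost_append, hqA1, hsplit]
        exact add_le_add hqA2 hqB2
      · have hnd : p.Nodup := (List.nodup_cons.mp (canonical_nodup hc)).2
        have hndAB : (A ++ B).Nodup := hAB ▸ hnd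
        have hdisj : List.Disjoint A B := List.disjoint_of_nodup_append hndAB
        set SA : Finset V := insert x ((A.dropLast.filter (· ∈ V')).toFinset) with hSA
        set SB : Finset V := insert z ((B.dropLast.filter (· ∈ V')).toFinset) with hSB
        have hSAsub : ∀ t ∈ SA, t ∈ A := by
          intro t ht
          rcases Finset.mem_insert.mp ht with h | h
          · rw [h, ← hlastA]; exact last_mem u hAne
          · rw [List.mem_toFinset, List.mem_filter] at h
            exact (List.dropLast_sublist A).subset h.1
        have hSBsub : ∀ t ∈ SB, t ∈ B := by
          intro t ht
          rcases Finset.mem_insert.mp ht with h | h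
          · rw [h]
            have hlB : last x B = z := hBcan0.2.1
            rw [← hlB]; exact last_mem x hBne
          · rw [List.mem_toFinset, List.mem_filter] at h
            exact (List.dropLast_sublist B).subset h.1
        have hdisjF : Disjoint SA SB := by
          rw [Finset.disjoint_left]
          intro t htA htB
          exact hdisj (hSAsub t htA) (hSBsub t htB)
        have hpd : p.dropLast = A ++ B.dropLast := by
          obtain ⟨b, l₂, hBeq⟩ := List.exists_cons_of_ne_nil hBne
          rw [hAB, hBeq]
          exact List.dropLast_append_cons
        have hunion : SA ∪ SB ⊆ insert z ((p.dropLast.filter (· ∈ V')).toFinset) := by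
          intro t ht
          rcases Finset.mem_union.mp ht with h | h
          · rcases Finset.mem_insert.mp h with h' | h'
            · subst h'
              refine Finset.mem_insert_of_mem ?_
              rw [List.mem_toFinset, List.mem_filter]
              exact ⟨hxd, by simpa using hxV⟩
            · refine Finset.mem_insert_of_mem ?_
              rw [List.mem_toFinset, List.mem_filter] at h' ⊢
              refine ⟨?_, h'.2⟩
              rw [hpd]
              exact List.mem_append_left _ ((List.dropLast_sublist A).subset h'.1)
          · rcases Finset.mem_insert.mp h with h' | h'
            · exact h' ▸ Finset.mem_insert_self _ _
            · refine Finset.mem_insert_of_mem ?_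
              rw [List.mem_toFinset, List.mem_filter] at h' ⊢
              refine ⟨?_, h'.2⟩
              rw [hpd]
              exact List.mem_append_right _ h'.1
        calc (qA ++ qB).length = qA.length + qB.length := List.length_append
          _ ≤ SA.card + SB.card := Nat.add_le_add hqA3 hqB3
          _ = (SA ∪ SB).card := (Finset.card_union_of_disjoint hdisjF).symm
          _ ≤ _ := Finset.card_le_card hunion
    · push_neg at hsamp
      have hdfin : hdist w p.length u z < ⊤ := hc.2.2.1 ▸ hfin
      have hplen : p.length ≤ Nat.sqrt n := by
        by_contra hbig
        push_neg at hbig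
        have hcanP := hP p.length u z hdfin
        have hpp : P p.length u z = p := canonical_unique hids hcanP hc
        obtain ⟨y, hy1, hy2⟩ := hA p.length u z hdfin (by rw [hpp]; omega)
        rw [hpp] at hy1
        exact (hsamp y hy1) hy2
      refine ⟨[z], rfl, ?_, ?_⟩
      · have h1 : cost (skelW w V' (Nat.sqrt n)) u [z] = skelW w V' (Nat.sqrt n) u z := by
          simp [cost]
        rw [h1, skelW, if_pos ⟨hu, hz⟩, hc.2.2.1]
        exact hdist_anti hplen u z
      · have hz1 : z ∈ insert z ((p.dropLast.filter (· ∈ V')).toFinset) :=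
          Finset.mem_insert_self _ _
        simpa using Finset.card_pos.mpr ⟨z, hz1⟩

end Aux
/-- Under event 𝒜, for every sampled vertex `v'`, the set of the `k` closest sampled
vertices under `k`-hop-limited distance in the skeleton graph `G'` equals the set of
the `k` closest sampled vertices under `(√n·k)`-hop-limited distance in `G` (ties
broken in both cases using the corresponding paths in `G`). -/
theorem skeleton_knear_eq [Fintype V] [DecidableEq V]
    (w : V → V → ℝ≥0∞) (hsymm : ∀ u v, w u v = w v u)
    (n : ℕ) (hn : n = Fintype.card V)
    (ids : V → ℕ) (hids : Function.Injective ids)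
    (P : ℕ → V → V → List V)
    (hP : ∀ i u v, hdist w i u v < ⊤ → CanonicalPath w ids i u v (P i u v))
    (V' : Finset V)
    (hA : ∀ i u v, hdist w i u v < ⊤ → Nat.sqrt n ≤ (P i u v).length →
      ∃ x ∈ (P i u v).dropLast, x ∈ V')
    (k : ℕ) (hk : 1 ≤ k)
    (v' : V) (hv' : v' ∈ V')
    (S₁ S₂ : Finset V)
    (hS₁ : IsKNear (hdist (skelW w V' (Nat.sqrt n)) k v')
      (fun x => (minHops w (Nat.sqrt n * k) v' x, ids x)) V' k v' S₁)
    (hS₂ : IsKNear (hdist w (Nat.sqrt n * k) v')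
      (fun x => (minHops w (Nat.sqrt n * k) v' x, ids x)) V' k v' S₂) :
    S₁ = S₂ := by
  classical
  have hge : ∀ x, hdist w (Nat.sqrt n * k) v' x ≤ hdist (skelW w V' (Nat.sqrt n)) k v' x :=
    fun x => hdist_skel_ge w V' (Nat.sqrt n) k v' x
  have claimA : ∀ z ∈ S₂,
      hdist (skelW w V' (Nat.sqrt n)) k v' z ≤ hdist w (Nat.sqrt n * k) v' z := by
    intro z hzS
    obtain ⟨hsub, hvnot, hcard, hfin4, hord, hfull⟩ := hS₂
    have hzV : z ∈ V' := hsub hzS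
    have hzfin : hdist w (Nat.sqrt n * k) v' z < ⊤ := hfin4 z hzS
    obtain ⟨p, hcan⟩ : ∃ p, CanonicalPath w ids (Nat.sqrt n * k) v' z p :=
      ⟨_, hP _ _ _ hzfin⟩
    have hlenp : p.length ≤ Nat.sqrt n * k := hcan.1
    have hcost : cost w v' p = hdist w (Nat.sqrt n * k) v' z := hcan.2.2.1
    have hfinp : cost w v' p < ⊤ := by rw [hcost]; exact hzfin
    have hcan' := canonical_shrink hcan
    obtain ⟨q, hql, hqc, hqlen⟩ :=
      lemB w n ids hids P hP V' hA p.length p v' z le_rfl hv' hzV hcan' hfinp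
    have hvnotp : v' ∉ p := (List.nodup_cons.mp (canonical_nodup hcan)).1
    have hsampS : insert z ((p.dropLast.filter (· ∈ V')).toFinset) ⊆ S₂ := by
      intro t ht
      rcases Finset.mem_insert.mp ht with h | h
      · exact h ▸ hzS
      rw [List.mem_toFinset, List.mem_filter] at h
      have htd : t ∈ p.dropLast := h.1
      have htV : t ∈ V' := by simpa using h.2
      by_cases htz : t = z
      · exact htz ▸ hzS
      by_contra htS
      obtain ⟨j, hj, hget⟩ := List.mem_iff_getElem.mp htd
      rw [List.getElem_dropLast] at hget
      rw [List.length_dropLast] at hj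
      have hjp : j + 1 < p.length := by omega
      set A := p.take (j + 1) with hAdef
      have hAB : p = A ++ p.drop (j + 1) := (List.take_append_drop _ p).symm
      have hAlen : A.length = j + 1 := by rw [hAdef, List.length_take]; omega
      have hlastA : last v' A = t := by
        rw [hAdef, last_take v' p j (by omega)]
        simpa using hget
      have htne : t ≠ v' := by
        intro he
        exact hvnotp (he ▸ ((List.dropLast_sublist p).subset htd))
      have hcsplit : cost w v' p = cost w v' A + cost w t (p.drop (j + 1)) := by
        conv_lhs => rw [hAB]
        rw [cost_append, hlastA]
      have hdA : hdist w (Nat.sqrt n * k) v' t ≤ cost w v' A :=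
        hdist_le_cost (by rw [hAlen]; omega) hlastA
      have hAle : cost w v' A ≤ cost w v' p := by rw [hcsplit]; exact le_self_add
      have htfin : hdist w (Nat.sqrt n * k) v' t < ⊤ :=
        lt_of_le_of_lt (hdA.trans hAle) hfinp
      have hkey := hord z hzS t htV htS htne htfin
      have hle2 : hdist w (Nat.sqrt n * k) v' t ≤ hdist w (Nat.sqrt n * k) v' z := by
        rw [← hcost]; exact hdA.trans hAle
      rcases Prod.lex_def.mp hkey with hlt | ⟨heq, htie⟩
      · exact absurd hlt (not_lt.mpr hle2)
      · have heq' : hdist w (Nat.sqrt n * k) v' z = hdist w (Nat.sqrt n * k) v' t := heq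
        have hAeq : cost w v' A = hdist w (Nat.sqrt n * k) v' t := by
          refine le_antisymm ?_ hdA
          rw [← heq', ← hcost]
          exact hAle
        have hmt : minHops w (Nat.sqrt n * k) v' t ≤ j + 1 := by
          have h5 := minHops_le (w := w) (by rw [hAlen]; omega) hlastA hAeq
          rw [hAlen] at h5; exact h5
        have hmz : minHops w (Nat.sqrt n * k) v' z = p.length := minHops_canonical hcan
        rcases Prod.lex_def.mp htie with h6 | ⟨h6, h7⟩
        · have h6' : minHops w (Nat.sqrt n * k) v' z < minHops w (Nat.sqrt n * k) v' t := h6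
          omega
        · have h6' : minHops w (Nat.sqrt n * k) v' z = minHops w (Nat.sqrt n * k) v' t := h6
          omega
    calc hdist (skelW w V' (Nat.sqrt n)) k v' z
        ≤ cost (skelW w V' (Nat.sqrt n)) v' q :=
          hdist_le_cost (hqlen.trans (le_trans (Finset.card_le_card hsampS) hcard)) hql
      _ ≤ cost w v' p := hqc
      _ = hdist w (Nat.sqrt n * k) v' z := hcost
  have heqd : ∀ x ∈ S₂,
      hdist (skelW w V' (Nat.sqrt n)) k v' x = hdist w (Nat.sqrt n * k) v' x :=
    fun x hx => le_antisymm (claimA x hx) (hge x)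
  have hS₂' : IsKNear (hdist (skelW w V' (Nat.sqrt n)) k v')
      (fun x => (minHops w (Nat.sqrt n * k) v' x, ids x)) V' k v' S₂ := by
    obtain ⟨h1, h2, h3, h4, h5, h6⟩ := hS₂
    refine ⟨h1, h2, h3, ?_, ?_, ?_⟩
    · intro y hy; rw [heqd y hy]; exact h4 y hy
    · intro y hy t ht htS htv htfin
      have ht2 : hdist w (Nat.sqrt n * k) v' t < ⊤ := lt_of_le_of_lt (hge t) htfin
      have hk := h5 y hy t ht htS htv ht2
      have hy1 := heqd y hy
      rcases Prod.lex_def.mp hk with hlt | ⟨heq, htie⟩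
      · refine Prod.lex_def.mpr (Or.inl ?_)
        show hdist (skelW w V' (Nat.sqrt n)) k v' y < hdist (skelW w V' (Nat.sqrt n)) k v' t
        rw [hy1]
        exact lt_of_lt_of_le hlt (hge t)
      · have heq' : hdist w (Nat.sqrt n * k) v' y = hdist w (Nat.sqrt n * k) v' t := heq
        have hle : hdist (skelW w V' (Nat.sqrt n)) k v' y ≤
            hdist (skelW w V' (Nat.sqrt n)) k v' t := by
          rw [hy1, heq']; exact hge t
        rcases lt_or_eq_of_le hle with h | h
        · exact Prod.lex_def.mpr (Or.inl h)
        · exact Prod.lex_def.mpr (Or.inr ⟨h, htie⟩)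
    · intro t ht htv htfin htS
      exact h6 t ht htv (lt_of_le_of_lt (hge t) htfin) htS
  exact isKNear_unique hS₁ hS₂'

end Stmt8
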